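/- Let f : R^n -> R be a function and \beta \ge 0 be such that x \mapsto f(x) + (\beta/2)|x|^2 is convex and \int e^f d\gamma_n = 1, where \gamma_n is the standard Gaussian measure on R^n. Then f(x) \le (n/2) \ln(1+\beta) + |x|^2/2 for all x in R^n. -/

import Mathlib

open MeasureTheory Real Set

noncomputable def stdGaussian (n : ℕ) : Measure (EuclideanSpace ℝ (Fin n)) :=
  volume.withDensity (fun x => ENNReal.ofReal ((2 * π) ^ (-(n : ℝ) / 2) * Real.exp (-‖x‖ ^ 2 / 2)))

noncomputable def Phibar (s : ℝ) : ℝ :=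
  (Real.sqrt (2 * π))⁻¹ * ∫ x in Set.Ioi s, Real.exp (-x ^ 2 / 2)

open RealInnerProductSpace Complex

lemma exists_subgrad {n : ℕ} {g : EuclideanSpace ℝ (Fin n) → ℝ}
    (hg : ConvexOn ℝ Set.univ g) (x₀ : EuclideanSpace ℝ (Fin n)) :
    ∃ v, ∀ x, g x₀ + ⟪v, x - x₀⟫ ≤ g x := by
  have hcont : Continuous g := by
    rw [← continuousOn_univ]
    exact hg.continuousOn isOpen_univ
  set S : Set (EuclideanSpace ℝ (Fin n) × ℝ) := {p | g p.1 < p.2} with hS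
  have hSconv : Convex ℝ S := by
    rintro ⟨x, s⟩ hx ⟨y, t⟩ hy a b ha hb hab
    simp only [hS, mem_setOf_eq] at *
    have h := hg.2 (mem_univ x) (mem_univ y) ha hb hab
    simp only [smul_eq_mul] at h
    refine lt_of_le_of_lt h ?_
    rcases ha.eq_or_lt with rfl | ha'
    · simp only [zero_add] at hab; subst hab; simpa using hy
    · exact add_lt_add_of_lt_of_le (mul_lt_mul_of_pos_left hx ha')
        (mul_le_mul_of_nonneg_left (le_of_lt hy) hb)
  have hSopen : IsOpen S := isOpen_lt (hcont.comp continuous_fst) continuous_snd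
  have hx₀ : ((x₀, g x₀) : EuclideanSpace ℝ (Fin n) × ℝ) ∉ S := by simp [hS]
  obtain ⟨L, hL⟩ := geometric_hahn_banach_open_point hSconv hSopen hx₀
  set c : ℝ := L (0, 1) with hc
  have hdecomp : ∀ (x : EuclideanSpace ℝ (Fin n)) (t : ℝ), L (x, t) = L (x, 0) + t * c := by
    intro x t
    have h : (x, t) = (x, (0:ℝ)) + t • ((0 : EuclideanSpace ℝ (Fin n)), (1:ℝ)) := by
      simp [Prod.ext_iff]
    rw [h, map_add, L.map_smul]; simp [hc, smul_eq_mul]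
  have hcneg : c < 0 := by
    have h1 := hL (x₀, g x₀ + 1) (by simp [hS])
    rw [hdecomp x₀ (g x₀ + 1), hdecomp x₀ (g x₀)] at h1
    nlinarith
  have hc' : (0:ℝ) < -c := by linarith
  have key : ∀ x, L (x, 0) + g x * c ≤ L (x₀, 0) + g x₀ * c := by
    intro x
    refine le_of_forall_pos_le_add fun δ hδ => ?_
    have hε : 0 < δ / (-c) := by positivity
    have h1 := hL (x, g x + δ / (-c)) (by simp [hS, hε])
    rw [hdecomp x (g x + δ / (-c)), hdecomp x₀ (g x₀)] at h1
    have h2 : δ / (-c) * c = -δ := by field_simp; rw [div_self (ne_of_lt hcneg)]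
    nlinarith
  set φ : EuclideanSpace ℝ (Fin n) →L[ℝ] ℝ := L.comp (ContinuousLinearMap.inl ℝ _ ℝ) with hφ
  have hφeq : ∀ x, φ x = L (x, 0) := fun x => rfl
  refine ⟨(InnerProductSpace.toDual ℝ _).symm ((-c)⁻¹ • φ), fun x => ?_⟩
  have hv : ∀ y, ⟪(InnerProductSpace.toDual ℝ _).symm ((-c)⁻¹ • φ), y⟫ = (-c)⁻¹ * φ y := by
    intro y
    rw [InnerProductSpace.toDual_symm_apply]
    rfl
  rw [inner_sub_right, hv, hv, hφeq, hφeq]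
  have h3 : L (x, 0) - L (x₀, 0) ≤ (-c) * (g x - g x₀) := by nlinarith [key x]
  have h4 := mul_le_mul_of_nonneg_left h3 (le_of_lt (inv_pos.mpr hc'))
  rw [inv_mul_cancel_left₀ (ne_of_gt hc'), mul_sub] at h4
  linarith

lemma gauss_int {n : ℕ} {b : ℝ} (hb : 0 < b) (w : EuclideanSpace ℝ (Fin n)) :
    ∫ x : EuclideanSpace ℝ (Fin n), rexp (-b * ‖x‖ ^ 2 + ⟪w, x⟫) =
      (π / b) ^ ((n : ℝ) / 2) * rexp (‖w‖ ^ 2 / (4 * b)) := by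
  have hC := GaussianFourier.integral_cexp_neg_mul_sq_norm_add (V := EuclideanSpace ℝ (Fin n))
    (b := (b : ℂ)) (by simpa using hb) 1 w
  have h1 : ∀ x : EuclideanSpace ℝ (Fin n),
      ((rexp (-b * ‖x‖ ^ 2 + ⟪w, x⟫) : ℝ) : ℂ) = cexp (-(b:ℂ) * ‖x‖ ^ 2 + 1 * ⟪w, x⟫) := by
    intro x
    rw [Complex.ofReal_exp]
    congr 1
    push_cast
    ring
  rw [← Complex.ofReal_inj]
  calc ((∫ x : EuclideanSpace ℝ (Fin n), rexp (-b * ‖x‖ ^ 2 + ⟪w, x⟫) : ℝ) : ℂ)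
      = ∫ x : EuclideanSpace ℝ (Fin n), ((rexp (-b * ‖x‖ ^ 2 + ⟪w, x⟫) : ℝ) : ℂ) :=
        (integral_ofReal (𝕜 := ℂ)).symm
    _ = ∫ x : EuclideanSpace ℝ (Fin n), cexp (-(b:ℂ) * ‖x‖ ^ 2 + 1 * ⟪w, x⟫) :=
        integral_congr_ae (Filter.Eventually.of_forall fun x => h1 x)
    _ = ((π : ℂ) / b) ^ ((Module.finrank ℝ (EuclideanSpace ℝ (Fin n)) : ℂ) / 2) *
          cexp (1 ^ 2 * (‖w‖:ℂ) ^ 2 / (4 * b)) := hC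
    _ = (((π / b) ^ ((n : ℝ) / 2) * rexp (‖w‖ ^ 2 / (4 * b)) : ℝ) : ℂ) := by
        rw [finrank_euclideanSpace_fin, Complex.ofReal_mul]
        congr 1
        · rw [Complex.ofReal_cpow (by positivity : (0:ℝ) ≤ π / b)]
          push_cast
          ring_nf
        · rw [Complex.ofReal_exp]
          congr 1
          push_cast
          ring

lemma gauss_int_integrable {n : ℕ} {b : ℝ} (hb : 0 < b) (w : EuclideanSpace ℝ (Fin n)) :
    Integrable (fun x : EuclideanSpace ℝ (Fin n) => rexp (-b * ‖x‖ ^ 2 + ⟪w, x⟫)) := by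
  have hC := GaussianFourier.integrable_cexp_neg_mul_sq_norm_add
    (V := EuclideanSpace ℝ (Fin n)) (b := (b : ℂ)) (by simpa using hb) 1 w
  refine hC.re.congr (Filter.Eventually.of_forall fun x => ?_)
  show (cexp (-(b:ℂ) * ‖x‖ ^ 2 + 1 * ⟪w, x⟫)).re = rexp (-b * ‖x‖ ^ 2 + ⟪w, x⟫)
  have h : (-(b:ℂ) * ‖x‖ ^ 2 + 1 * ⟪w, x⟫) = ((-b * ‖x‖ ^ 2 + ⟪w, x⟫ : ℝ) : ℂ) := by
    push_cast; ring
  rw [h, ← Complex.ofReal_exp, Complex.ofReal_re]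

theorem pointwise_bound_semiconvex (n : ℕ) (f : EuclideanSpace ℝ (Fin n) → ℝ) (β : ℝ)
    (hβ : 0 ≤ β)
    (hconv : ConvexOn ℝ Set.univ (fun x => f x + β / 2 * ‖x‖ ^ 2))
    (hint : ∫ x, Real.exp (f x) ∂(stdGaussian n) = 1) :
    ∀ x, f x ≤ (n : ℝ) / 2 * Real.log (1 + β) + ‖x‖ ^ 2 / 2 := by
  intro x₀
  set s : ℝ := 1 + β with hs_def
  clear_value s
  have hs1 : (0:ℝ) < s := by rw [hs_def]; linarith
  set b : ℝ := s / 2 with hb_def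
  clear_value b
  have hbpos : (0:ℝ) < b := by rw [hb_def]; linarith
  set ρ : EuclideanSpace ℝ (Fin n) → ℝ :=
    fun x => (2 * π) ^ (-(n : ℝ) / 2) * Real.exp (-‖x‖ ^ 2 / 2) with hρ_def
  have hρpos : ∀ x, 0 < ρ x := fun x => by rw [hρ_def]; positivity
  have hρcont : Continuous ρ := by
    rw [hρ_def]
    apply Continuous.mul continuous_const
    exact Real.continuous_exp.comp (by fun_prop)
  -- convert the Gaussian integral to a Lebesgue integral
  have hint' : ∫ x, ρ x * rexp (f x) = 1 := by
    have hmeas : Measurable fun x : EuclideanSpace ℝ (Fin n) => (ρ x).toNNReal :=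
      hρcont.measurable.real_toNNReal
    have heq : stdGaussian n
        = volume.withDensity (fun x => ((ρ x).toNNReal : ENNReal)) := by
      unfold stdGaussian
      congr 1
    rw [heq, integral_withDensity_eq_integral_smul hmeas] at hint
    rw [← hint]
    refine integral_congr_ae (Filter.Eventually.of_forall fun x => ?_)
    simp [NNReal.smul_def, Real.coe_toNNReal _ (hρpos x).le]
  -- subgradient
  set g : EuclideanSpace ℝ (Fin n) → ℝ := fun x => f x + β / 2 * ‖x‖ ^ 2 with hg_def
  obtain ⟨v, hv⟩ := exists_subgrad hconv x₀
  set K : ℝ := (2 * π) ^ (-(n : ℝ) / 2) * rexp (g x₀ - ⟪v, x₀⟫) with hK_def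
  clear_value K
  have hle : ∀ x, K * rexp (-b * ‖x‖ ^ 2 + ⟪v, x⟫) ≤ ρ x * rexp (f x) := by
    intro x
    have h1 : g x₀ + (⟪v, x⟫ - ⟪v, x₀⟫) ≤ f x + β / 2 * ‖x‖ ^ 2 := by
      have h0 := hv x
      rw [inner_sub_right] at h0
      calc g x₀ + (⟪v, x⟫ - ⟪v, x₀⟫) ≤ g x := h0
        _ = f x + β / 2 * ‖x‖ ^ 2 := by rw [hg_def]
    have h2 : K * rexp (-b * ‖x‖ ^ 2 + ⟪v, x⟫)
        = (2 * π) ^ (-(n : ℝ) / 2) * rexp (g x₀ - ⟪v, x₀⟫ + (-b * ‖x‖ ^ 2 + ⟪v, x⟫)) := by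
      rw [hK_def, mul_assoc, ← Real.exp_add]
    have h3 : ρ x * rexp (f x) = (2 * π) ^ (-(n : ℝ) / 2) * rexp (-‖x‖ ^ 2 / 2 + f x) := by
      rw [hρ_def, mul_assoc, ← Real.exp_add]
    rw [h2, h3]
    apply mul_le_mul_of_nonneg_left _ (by positivity)
    apply Real.exp_le_exp.2
    have hb2 : b * ‖x‖ ^ 2 = ‖x‖ ^ 2 / 2 + β / 2 * ‖x‖ ^ 2 := by
      rw [hb_def, hs_def]; ring
    nlinarith [h1]
  have hlowint : Integrable (fun x => K * rexp (-b * ‖x‖ ^ 2 + ⟪v, x⟫)) :=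
    (gauss_int_integrable hbpos v).const_mul K
  -- main inequality
  have hmono : K * ((π / b) ^ ((n : ℝ) / 2) * rexp (‖v‖ ^ 2 / (4 * b))) ≤ 1 := by
    by_cases hI : Integrable (fun x => ρ x * rexp (f x)) volume
    · have h4 := integral_mono hlowint hI hle
      rw [hint', integral_const_mul, gauss_int hbpos v] at h4
      linarith
    · rw [integral_undef hI] at hint'
      norm_num at hint'
  -- simplify the constant
  have hππ : (0:ℝ) < 2 * π := by positivity
  have hP : (2 * π) ^ (-(n : ℝ) / 2) * (π / b) ^ ((n : ℝ) / 2) = s ^ (-((n : ℝ) / 2)) := by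
    rw [neg_div, Real.rpow_neg hππ.le, inv_mul_eq_div, ← Real.div_rpow (by positivity) hππ.le]
    rw [show π / b / (2 * π) = s⁻¹ by
      rw [hb_def]; field_simp]
    rw [Real.inv_rpow hs1.le, ← Real.rpow_neg hs1.le]
  have hkey : s ^ (-((n : ℝ) / 2)) * rexp (g x₀ - ⟪v, x₀⟫ + ‖v‖ ^ 2 / (4 * b)) ≤ 1 := by
    calc s ^ (-((n : ℝ) / 2)) * rexp (g x₀ - ⟪v, x₀⟫ + ‖v‖ ^ 2 / (4 * b))
        = ((2 * π) ^ (-(n : ℝ) / 2) * (π / b) ^ ((n : ℝ) / 2)) *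
            (rexp (g x₀ - ⟪v, x₀⟫) * rexp (‖v‖ ^ 2 / (4 * b))) := by
          rw [hP, ← Real.exp_add]
      _ = K * ((π / b) ^ ((n : ℝ) / 2) * rexp (‖v‖ ^ 2 / (4 * b))) := by
          rw [hK_def]; ring
      _ ≤ 1 := hmono
  -- take logarithms
  have h6 : rexp (g x₀ - ⟪v, x₀⟫ + ‖v‖ ^ 2 / (4 * b)) ≤ s ^ ((n : ℝ) / 2) := by
    have hmul : s ^ ((n : ℝ) / 2) * s ^ (-((n : ℝ) / 2)) = 1 := by
      rw [← Real.rpow_add hs1]; simp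
    calc rexp (g x₀ - ⟪v, x₀⟫ + ‖v‖ ^ 2 / (4 * b))
        = (s ^ ((n : ℝ) / 2) * s ^ (-((n : ℝ) / 2))) *
            rexp (g x₀ - ⟪v, x₀⟫ + ‖v‖ ^ 2 / (4 * b)) := by rw [hmul]; ring
      _ = s ^ ((n : ℝ) / 2) * (s ^ (-((n : ℝ) / 2)) *
            rexp (g x₀ - ⟪v, x₀⟫ + ‖v‖ ^ 2 / (4 * b))) := by ring
      _ ≤ s ^ ((n : ℝ) / 2) * 1 :=
          mul_le_mul_of_nonneg_left hkey (Real.rpow_pos_of_pos hs1 _).le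
      _ = s ^ ((n : ℝ) / 2) := mul_one _
  have hA : g x₀ - ⟪v, x₀⟫ + ‖v‖ ^ 2 / (4 * b) ≤ (n : ℝ) / 2 * Real.log s := by
    have h7 := Real.log_le_log (Real.exp_pos _) h6
    rwa [Real.log_exp, Real.log_rpow hs1] at h7
  -- finish with Cauchy-Schwarz / AM-GM
  have key2 : 2 * s * ⟪v, x₀⟫ ≤ ‖v‖ ^ 2 + s ^ 2 * ‖x₀‖ ^ 2 := by
    nlinarith [sq_nonneg (‖v‖ - s * ‖x₀‖),
      mul_le_mul_of_nonneg_left (real_inner_le_norm v x₀) (by positivity : (0:ℝ) ≤ 2 * s)]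
  have hDv : ‖v‖ ^ 2 = 2 * s * (‖v‖ ^ 2 / (4 * b)) := by
    rw [hb_def]
    field_simp
    ring
  have h8 : s * (2 * ⟪v, x₀⟫) ≤ s * (2 * (‖v‖ ^ 2 / (4 * b)) + s * ‖x₀‖ ^ 2) := by
    nlinarith [key2, hDv]
  have h9 := (mul_le_mul_iff_right₀ hs1).mp h8
  have hsx : s * ‖x₀‖ ^ 2 = ‖x₀‖ ^ 2 + β * ‖x₀‖ ^ 2 := by rw [hs_def]; ring
  have hgx₀ : g x₀ = f x₀ + β / 2 * ‖x₀‖ ^ 2 := by rw [hg_def]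
  linarith [hA, h9, hsx, hgx₀]
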